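/- Let R be a subring of a commutative ring T with a common ideal C containing a T-regular element, with T flat over R. If R is quasi-coherent (every annihilator (0 :_R a) is finitely generated and every finite intersection of principal ideals is finitely generated), then T is quasi-coherent. -/

import Mathlib

universe u

open Module

section FlatLemmas

variable {S T : Type u} [CommRing S] [CommRing T] [Algebra S T] [Module.Flat S T]

/-- For a flat algebra, extension of ideals commutes with binary intersection. -/
lemma flat_map_inf (I J : Ideal S) :
    Ideal.map (algebraMap S T) (I ⊓ J) =
      Ideal.map (algebraMap S T) I ⊓ Ideal.map (algebraMap S T) J := by
  classical
  refine le_antisymm (le_inf (Ideal.map_mono inf_le_left) (Ideal.map_mono inf_le_right)) ?_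
  rintro x hx
  obtain ⟨hxI, hxJ⟩ := Submodule.mem_inf.mp hx
  rw [show Ideal.map (algebraMap S T) I = Submodule.span T ((algebraMap S T) '' I) from rfl,
    Submodule.mem_span_set'] at hxI
  rw [show Ideal.map (algebraMap S T) J = Submodule.span T ((algebraMap S T) '' J) from rfl,
    Submodule.mem_span_set'] at hxJ
  obtain ⟨n, uT, g, hg⟩ := hxI
  obtain ⟨m, vT, h, hh⟩ := hxJ
  choose p hpI hpeq using fun i => (g i).2
  choose q hqJ hqeq using fun j => (h j).2
  set F : ULift.{u} (Fin n ⊕ Fin m) → S :=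
    fun i => Sum.elim p (fun j => -(q j)) i.down with hF
  set X : ULift.{u} (Fin n ⊕ Fin m) → T :=
    fun i => Sum.elim uT vT i.down with hX
  have hrel : ∑ i, F i • X i = 0 := by
    rw [Fintype.sum_equiv (Equiv.ulift) (fun i => F i • X i)
      (fun i => Sum.elim p (fun j => -(q j)) i • Sum.elim uT vT i) (fun i => rfl)]
    rw [Fintype.sum_sum_type]
    have h1 : ∀ i, (p i) • uT i = uT i • ((g i : T)) := fun i => by
      rw [Algebra.smul_def, hpeq, smul_eq_mul, mul_comm]
    have h2 : ∀ j, (-(q j)) • vT j = -(vT j • ((h j : T))) := fun j => by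
      rw [neg_smul, Algebra.smul_def, hqeq, smul_eq_mul, mul_comm]
    simp only [Sum.elim_inl, Sum.elim_inr, h1, h2, Finset.sum_neg_distrib]
    rw [hg, hh]
    simp
  obtain ⟨κ, a, y, hXy, hay⟩ :=
    Module.Flat.isTrivialRelation_of_sum_smul_eq_zero (R := S) (M := T) (f := F) (x := X) hrel
  set d : Fin κ → S := fun k => ∑ i : Fin n, p i * a ⟨Sum.inl i⟩ k with hd
  have hdI : ∀ k, d k ∈ I := fun k =>
    Ideal.sum_mem _ fun i _ => Ideal.mul_mem_right _ _ (hpI i)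
  have hdJ : ∀ k, d k ∈ J := by
    intro k
    have := hay k
    rw [Fintype.sum_equiv (Equiv.ulift) (fun i => F i * a i k)
      (fun i => Sum.elim p (fun j => -(q j)) i * a ⟨i⟩ k) (fun i => rfl),
      Fintype.sum_sum_type] at this
    simp only [Sum.elim_inl, Sum.elim_inr, neg_mul] at this
    have hdk : d k = ∑ j : Fin m, q j * a ⟨Sum.inr j⟩ k := by
      rw [hd]
      rw [Finset.sum_neg_distrib] at this
      linear_combination this
    rw [hdk]
    exact Ideal.sum_mem _ fun j _ => Ideal.mul_mem_right _ _ (hqJ j)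
  have hxd : x = ∑ k, d k • y k := by
    have hx1 : x = ∑ i : Fin n, p i • uT i := by
      rw [← hg]
      refine Finset.sum_congr rfl fun i _ => ?_
      rw [smul_eq_mul, Algebra.smul_def, hpeq]
      ring
    rw [hx1]
    have : ∀ i : Fin n, p i • uT i = ∑ k, (p i * a ⟨Sum.inl i⟩ k) • y k := by
      intro i
      rw [show uT i = X ⟨Sum.inl i⟩ from rfl, hXy ⟨Sum.inl i⟩, Finset.smul_sum]
      exact Finset.sum_congr rfl fun k _ => smul_smul _ _ _
    rw [Finset.sum_congr rfl fun i _ => this i, Finset.sum_comm]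
    exact Finset.sum_congr rfl fun k _ => (Finset.sum_smul).symm
  rw [hxd]
  refine Ideal.sum_mem _ fun k _ => ?_
  rw [Algebra.smul_def]
  exact Ideal.mul_mem_right _ _ (Ideal.mem_map_of_mem _ ⟨hdI k, hdJ k⟩)

/-- For a flat algebra, the annihilator of (the image of) an element of `S` in `T` is the
extension of the annihilator in `S`. -/
lemma flat_colon (b : S) :
    (⊥ : Ideal T).colon (Ideal.span {algebraMap S T b}) =
      Ideal.map (algebraMap S T) ((⊥ : Ideal S).colon (Ideal.span {b})) := by
  refine le_antisymm ?_ ?_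
  · intro x hx
    rw [Ideal.mem_colon_span_singleton, Ideal.mem_bot] at hx
    have hrel : ∑ _i : PUnit.{u + 1}, b • x = 0 := by
      simp [Algebra.smul_def, mul_comm x _] at hx ⊢
      simp [hx]
    obtain ⟨κ, a, y, hXy, hay⟩ :=
      Module.Flat.isTrivialRelation_of_sum_smul_eq_zero (f := fun _ : PUnit.{u+1} => b)
        (x := fun _ => x) hrel
    have hXy' : x = ∑ j : Fin κ, a PUnit.unit j • y j := hXy PUnit.unit
    rw [hXy']
    refine Ideal.sum_mem _ fun k _ => ?_
    rw [Algebra.smul_def]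
    refine Ideal.mul_mem_right _ _ (Ideal.mem_map_of_mem _ ?_)
    rw [Ideal.mem_colon_span_singleton, Ideal.mem_bot, mul_comm]
    simpa using hay k
  · rw [Ideal.map_le_iff_le_comap]
    intro r hr
    rw [Ideal.mem_colon_span_singleton, Ideal.mem_bot] at hr
    rw [Ideal.mem_comap, Ideal.mem_colon_span_singleton, Ideal.mem_bot,
      ← map_mul, hr, map_zero]

/-- For a flat algebra, extension of ideals commutes with finite intersections. -/
lemma flat_map_finset_inf {ι : Type*} (s : Finset ι) (f : ι → Ideal S) :
    Ideal.map (algebraMap S T) (s.inf f) =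
      s.inf fun i => Ideal.map (algebraMap S T) (f i) := by
  classical
  induction s using Finset.induction with
  | empty => simpa using Ideal.map_top (algebraMap S T)
  | insert _ _ hnm ih => rw [Finset.inf_insert, Finset.inf_insert, flat_map_inf, ih]

end FlatLemmas

/-- A quasi-coherent ring: every annihilator ideal `(0 :_R a)` is finitely
generated, and every intersection of finitely many principal ideals is finitely
generated. -/
def IsQuasiCoherentRing (R : Type*) [CommRing R] : Prop :=
  (∀ a : R, (Submodule.colon (⊥ : Ideal R) (Ideal.span {a})).FG) ∧
    ∀ s : Finset R, (s.inf fun a => (Ideal.span {a} : Ideal R)).FG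

/-- regular conductor situation with `T` flat over `R`; if `R` is
quasi-coherent, then so is `T`. -/
theorem stmt_17 (T : Type*) [CommRing T] (R : Subring T) (C : Ideal T)
    (hCR : (C : Set T) ⊆ (R : Set T))
    (hreg : ∃ c ∈ C, c ∈ nonZeroDivisors T)
    (hflat : Module.Flat ↥R T)
    (hR : IsQuasiCoherentRing ↥R) :
    IsQuasiCoherentRing T := by
  classical
  haveI := hflat
  obtain ⟨c, hcC, hc⟩ := hreg
  have hcreg : ∀ z : T, z * c = 0 → z = 0 := fun z hz => mem_nonZeroDivisors_iff_right.mp hc z hz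
  constructor
  · intro a
    have hbR : c * a ∈ R := hCR (Ideal.mul_mem_right a C hcC)
    set b' : ↥R := ⟨c * a, hbR⟩ with hb'
    have h1 : (⊥ : Ideal T).colon (Ideal.span {a}) =
        (⊥ : Ideal T).colon (Ideal.span {c * a}) := by
      ext x
      simp only [Ideal.mem_colon_span_singleton, Ideal.mem_bot]
      constructor
      · intro hxa
        calc x * (c * a) = (x * a) * c := by ring
        _ = 0 := by rw [hxa, zero_mul]
      · intro hxa
        refine hcreg (x * a) ?_
        calc (x * a) * c = x * (c * a) := by ring
        _ = 0 := hxa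
    have h2 := flat_colon (S := ↥R) (T := T) b'
    have h3 : Ideal.span {algebraMap ↥R T b'} = Ideal.span {c * a} := rfl
    rw [h1, ← h3, h2]
    exact (hR.1 b').map _
  · intro s
    rcases s.eq_empty_or_nonempty with rfl | hs
    · rw [Finset.inf_empty]
      exact ⟨{1}, by simp⟩
    · set b : T → ↥R := fun a => ⟨c * a, hCR (Ideal.mul_mem_right a C hcC)⟩ with hb
      have hS : ((s.image b).inf fun r => (Ideal.span {r} : Ideal ↥R)).FG := hR.2 _
      rw [Finset.inf_image] at hS
      have hmapFG : (Ideal.map (algebraMap ↥R T)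
          (s.inf fun a => (Ideal.span {b a} : Ideal ↥R))).FG := hS.map _
      have hinf : Ideal.map (algebraMap ↥R T) (s.inf fun a => (Ideal.span {b a} : Ideal ↥R)) =
          s.inf fun a => (Ideal.span {c * a} : Ideal T) := by
        rw [flat_map_finset_inf]
        refine Finset.inf_congr rfl fun a _ => ?_
        rw [Ideal.map_span, Set.image_singleton]
        rfl
      rw [hinf] at hmapFG
      have hcinj : Function.Injective (LinearMap.lsmul T T c) := by
        intro x y hxy
        simp only [LinearMap.lsmul_apply, smul_eq_mul] at hxy
        have h0 : (x - y) * c = 0 := by linear_combination hxy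
        have := hcreg _ h0
        exact sub_eq_zero.mp this
      have hmapinf : Submodule.map (LinearMap.lsmul T T c)
          (s.inf fun a => (Ideal.span {a} : Ideal T)) =
          s.inf fun a => (Ideal.span {c * a} : Ideal T) := by
        refine le_antisymm ?_ ?_
        · refine Finset.le_inf fun a ha => ?_
          refine le_trans (Submodule.map_mono (Finset.inf_le ha)) ?_
          rw [show (Ideal.span {a} : Ideal T) = Submodule.span T {a} from rfl,
            Submodule.map_span]
          simp [smul_eq_mul]
        · intro x hx
          obtain ⟨a₀, ha₀⟩ := hs
          obtain ⟨u, hu⟩ := Ideal.mem_span_singleton'.mp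
            (Submodule.mem_finsetInf.mp hx a₀ ha₀)
          set w := u * a₀ with hw
          have hxw : x = c * w := by rw [← hu, hw]; ring
          have hwmem : w ∈ s.inf fun a => (Ideal.span {a} : Ideal T) := by
            refine Submodule.mem_finsetInf.mpr fun a ha => ?_
            obtain ⟨v, hv⟩ := Ideal.mem_span_singleton'.mp
              (Submodule.mem_finsetInf.mp hx a ha)
            have hvc : (v * a - w) * c = 0 := by
              have h1 : v * a * c = x := by rw [← hv]; ring
              have h2 : w * c = x := by rw [hxw]; ring
              rw [sub_mul, h1, h2, sub_self]
            have := hcreg _ hvc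
            have hva : v * a = w := by linear_combination this
            exact Ideal.mem_span_singleton'.mpr ⟨v, hva⟩
          exact ⟨w, hwmem, by simp [LinearMap.lsmul_apply, smul_eq_mul, hxw]⟩
      exact Submodule.fg_of_fg_map_injective _ hcinj (by rw [hmapinf]; exact hmapFG)
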